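/- Suppose 1 ≤ k ≤ n and X is an n×n density matrix. Then the trace-norm distance from X to the set D_{n,k} of density matrices of rank at most k satisfies d(X, D_{n,k}) ≤ d((1/n)·I_n, D_{n,k}) = 2(n−k)/n. -/

import Mathlib

open Matrix BigOperators Finset
open scoped ComplexOrder

/-- The singular values of a square complex matrix. -/
noncomputable def singVals {n : ℕ} (A : Matrix (Fin n) (Fin n) ℂ) : Fin n → ℝ :=
  fun i => Real.sqrt ((Matrix.isHermitian_conjTranspose_mul_self A).eigenvalues i)

/-- The trace norm: the sum of singular values. -/
noncomputable def traceNorm {n : ℕ} (A : Matrix (Fin n) (Fin n) ℂ) : ℝ :=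
  ∑ i, singVals A i

/-- A density matrix: positive semidefinite with trace 1. -/
def IsDensity {n : ℕ} (X : Matrix (Fin n) (Fin n) ℂ) : Prop :=
  X.PosSemidef ∧ X.trace = 1

/-- Distance from `X` to the set of density matrices of rank at most `k`,
measured via a given norm `N`. -/
noncomputable def distToLowRank {n : ℕ} (N : Matrix (Fin n) (Fin n) ℂ → ℝ) (k : ℕ)
    (X : Matrix (Fin n) (Fin n) ℂ) : ℝ :=
  sInf {t | ∃ Y : Matrix (Fin n) (Fin n) ℂ, IsDensity Y ∧ Y.rank ≤ k ∧ t = N (X - Y)}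

namespace StmtAux

variable {n : ℕ}

lemma traceNorm_nonneg (A : Matrix (Fin n) (Fin n) ℂ) : 0 ≤ traceNorm A :=
  Finset.sum_nonneg fun _ _ => Real.sqrt_nonneg _

lemma conj_mul_conj (V A B : Matrix (Fin n) (Fin n) ℂ) (hV : star V * V = 1) :
    (V * A * star V) * (V * B * star V) = V * (A * B) * star V := by
  simp only [Matrix.mul_assoc]
  rw [← Matrix.mul_assoc (star V) V, hV, Matrix.one_mul]

lemma trace_conj (V D : Matrix (Fin n) (Fin n) ℂ) (hV : star V * V = 1) :
    (V * D * star V).trace = D.trace := by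
  rw [Matrix.trace_mul_cycle, hV, Matrix.one_mul]

lemma star_diag_real (r : Fin n → ℝ) :
    star (Matrix.diagonal (fun i => (r i : ℂ))) = Matrix.diagonal (fun i => (r i : ℂ)) := by
  rw [Matrix.star_eq_conjTranspose, Matrix.diagonal_conjTranspose]
  ext i j
  simp [Matrix.diagonal_apply, Complex.conj_ofReal]

lemma traceNorm_conj (V : Matrix (Fin n) (Fin n) ℂ)
    (hV : V ∈ Matrix.unitaryGroup (Fin n) ℂ) (r : Fin n → ℝ) :
    traceNorm (V * Matrix.diagonal (fun i => (r i : ℂ)) * star V) = ∑ i, |r i| := by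
  have hV2 : star V * V = 1 := (Matrix.mem_unitaryGroup_iff').mp hV
  set A := V * Matrix.diagonal (fun i => (r i : ℂ)) * star V with hAdef
  have hAH : Aᴴ = A := by
    rw [hAdef, ← Matrix.star_eq_conjTranspose]
    simp only [StarMul.star_mul, star_star, star_diag_real, Matrix.mul_assoc]
  have hAHA : Aᴴ * A = V * Matrix.diagonal (fun i => ((r i : ℂ) * (r i : ℂ))) * star V := by
    rw [hAH, hAdef, conj_mul_conj _ _ _ hV2, Matrix.diagonal_mul_diagonal]
  set B := V * Matrix.diagonal (fun i => ((|r i| : ℝ) : ℂ)) * star V with hBdef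
  have hB : Matrix.PosSemidef B := by
    have := Matrix.PosSemidef.mul_mul_conjTranspose_same
      (Matrix.posSemidef_diagonal_iff.mpr (fun i => Complex.zero_le_real.mpr (abs_nonneg (r i)))) V
    simpa [← Matrix.star_eq_conjTranspose] using this
  have habs : (fun i => ((|r i| : ℝ) : ℂ) * ((|r i| : ℝ) : ℂ))
      = fun i => ((r i : ℂ) * (r i : ℂ)) := by
    funext i
    rw [← Complex.ofReal_mul, ← Complex.ofReal_mul, abs_mul_abs_self]
  have hB2 : B * B = Aᴴ * A := by
    rw [hAHA, hBdef, conj_mul_conj _ _ _ hV2, Matrix.diagonal_mul_diagonal, habs]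
  have hP : Matrix.PosSemidef (Aᴴ * A) := Matrix.posSemidef_conjTranspose_mul_self A
  have hsqrt : hP.1.cfc Real.sqrt = B := by
    open scoped MatrixOrder in
    rw [← Matrix.IsHermitian.cfc_eq, ← cfcₙ_eq_cfc, ← CFC.sqrt_eq_real_sqrt (Aᴴ * A) hP.nonneg]
    exact CFC.sqrt_unique hB2 hB.nonneg
  have hU2 : star (hP.1.eigenvectorUnitary : Matrix (Fin n) (Fin n) ℂ)
      * (hP.1.eigenvectorUnitary : Matrix (Fin n) (Fin n) ℂ) = 1 := by
    exact_mod_cast Unitary.coe_star_mul_self hP.1.eigenvectorUnitary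
  have t2 : (hP.1.cfc Real.sqrt).trace = ((∑ i, Real.sqrt (hP.1.eigenvalues i) : ℝ) : ℂ) := by
    have hd : hP.1.cfc Real.sqrt = (hP.1.eigenvectorUnitary : Matrix (Fin n) (Fin n) ℂ)
        * Matrix.diagonal ((↑) ∘ Real.sqrt ∘ hP.1.eigenvalues)
        * star (hP.1.eigenvectorUnitary : Matrix (Fin n) (Fin n) ℂ) := by
      rw [Matrix.IsHermitian.cfc, Unitary.conjStarAlgAut_apply]; rfl
    rw [hd, trace_conj _ _ hU2, Matrix.trace_diagonal]
    push_cast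
    rfl
  have t1 : B.trace = ((∑ i, |r i| : ℝ) : ℂ) := by
    rw [hBdef, trace_conj _ _ hV2, Matrix.trace_diagonal]
    push_cast
    rfl
  have key : (∑ i, Real.sqrt (hP.1.eigenvalues i)) = ∑ i, |r i| := by
    have := t2.symm.trans (by rw [hsqrt, t1])
    exact_mod_cast this
  calc traceNorm A = ∑ i, Real.sqrt (hP.1.eigenvalues i) := rfl
    _ = ∑ i, |r i| := key

lemma isDensity_conj (V : Matrix (Fin n) (Fin n) ℂ) (hV : V ∈ Matrix.unitaryGroup (Fin n) ℂ)
    (d : Fin n → ℝ) (hd0 : ∀ i, 0 ≤ d i) (hd1 : ∑ i, d i = 1) :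
    IsDensity (V * Matrix.diagonal (fun i => (d i : ℂ)) * star V) := by
  constructor
  · have := Matrix.PosSemidef.mul_mul_conjTranspose_same
      (Matrix.posSemidef_diagonal_iff.mpr (fun i => Complex.zero_le_real.mpr (hd0 i))) V
    simpa [← Matrix.star_eq_conjTranspose] using this
  · rw [trace_conj _ _ ((Matrix.mem_unitaryGroup_iff').mp hV), Matrix.trace_diagonal]
    exact_mod_cast congrArg (Complex.ofReal) hd1

lemma rank_conj_le (V : Matrix (Fin n) (Fin n) ℂ) (hV : V ∈ Matrix.unitaryGroup (Fin n) ℂ)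
    (d : Fin n → ℝ) :
    (V * Matrix.diagonal (fun i => (d i : ℂ)) * star V).rank
      = (Finset.univ.filter (fun i => d i ≠ 0)).card := by
  have hdV : IsUnit V.det := by
    apply IsUnit.of_mul_eq_one (star V).det
    rw [← Matrix.det_mul, (Matrix.mem_unitaryGroup_iff).mp hV, Matrix.det_one]
  have hdVs : IsUnit (star V).det := by
    apply IsUnit.of_mul_eq_one V.det
    rw [← Matrix.det_mul, (Matrix.mem_unitaryGroup_iff').mp hV, Matrix.det_one]
  rw [Matrix.rank_mul_eq_left_of_isUnit_det (star V) _ hdVs,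
    Matrix.rank_mul_eq_right_of_isUnit_det V _ hdV,
    Matrix.rank_diagonal, Fintype.card_subtype]
  congr 1
  ext i
  simp [Complex.ofReal_ne_zero]

lemma sub_conj (V : Matrix (Fin n) (Fin n) ℂ) (a b : Fin n → ℝ) :
    V * Matrix.diagonal (fun i => (a i : ℂ)) * star V
      - V * Matrix.diagonal (fun i => (b i : ℂ)) * star V
      = V * Matrix.diagonal (fun i => ((a i - b i : ℝ) : ℂ)) * star V := by
  have hD : Matrix.diagonal (fun i => ((a i - b i : ℝ) : ℂ))
      = Matrix.diagonal (fun i => (a i : ℂ)) - Matrix.diagonal (fun i => (b i : ℂ)) := by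
    rw [Matrix.diagonal_sub]
    congr 1
    funext i
    push_cast
    rfl
  rw [hD, Matrix.mul_sub, Matrix.sub_mul]

lemma distSet_bddBelow (k : ℕ) (X : Matrix (Fin n) (Fin n) ℂ) :
    BddBelow {t | ∃ Y : Matrix (Fin n) (Fin n) ℂ,
      IsDensity Y ∧ Y.rank ≤ k ∧ t = traceNorm (X - Y)} := by
  refine ⟨0, ?_⟩
  rintro t ⟨Y, -, -, rfl⟩
  exact traceNorm_nonneg _

lemma distToLowRank_le (k : ℕ) (X Y : Matrix (Fin n) (Fin n) ℂ)
    (hY : IsDensity Y) (hr : Y.rank ≤ k) :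
    distToLowRank traceNorm k X ≤ traceNorm (X - Y) :=
  csInf_le (distSet_bddBelow k X) ⟨Y, hY, hr, rfl⟩

lemma exists_top_subset (f : Fin n → ℝ) (k : ℕ) (hk : k ≤ n) :
    ∃ S : Finset (Fin n), S.card = k ∧ ∀ i ∈ S, ∀ j, j ∉ S → f j ≤ f i := by
  induction k with
  | zero => exact ⟨∅, rfl, by simp⟩
  | succ m ih =>
    obtain ⟨S, hcard, hS⟩ := ih (Nat.le_of_succ_le hk)
    have hne : (Sᶜ : Finset (Fin n)).Nonempty := by
      rw [← Finset.card_pos, Finset.card_compl, hcard, Fintype.card_fin]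
      omega
    obtain ⟨j, hjmem, hjmax⟩ := Finset.exists_max_image (Sᶜ) f hne
    have hjS : j ∉ S := Finset.mem_compl.mp hjmem
    refine ⟨insert j S, ?_, ?_⟩
    · rw [Finset.card_insert_of_notMem hjS, hcard]
    · intro i hi l hl
      have hlS : l ∉ S := fun h => hl (Finset.mem_insert_of_mem h)
      rcases Finset.mem_insert.mp hi with rfl | hiS
      · exact hjmax l (Finset.mem_compl.mpr hlS)
      · exact hS i hiS l hlS

lemma topsum_ge (f : Fin n → ℝ) (hf1 : ∑ i, f i = 1)
    (S : Finset (Fin n)) (k : ℕ) (hcard : S.card = k) (hkn : k ≤ n) (hn : 0 < n)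
    (hS : ∀ i ∈ S, ∀ j, j ∉ S → f j ≤ f i) :
    (k : ℝ) / n ≤ ∑ i ∈ S, f i := by
  have hnR : (0:ℝ) < n := by exact_mod_cast hn
  rw [div_le_iff₀ hnR]
  have hpair : 0 ≤ ∑ i ∈ S, ∑ j ∈ Sᶜ, (f i - f j) := by
    refine Finset.sum_nonneg fun i hi => Finset.sum_nonneg fun j hj => ?_
    exact sub_nonneg.mpr (hS i hi j (Finset.mem_compl.mp hj))
  have e1 : ∀ i, ∑ j ∈ Sᶜ, (f i - f j) = (Sᶜ.card : ℝ) * f i - ∑ j ∈ Sᶜ, f j := by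
    intro i
    rw [Finset.sum_sub_distrib, Finset.sum_const, nsmul_eq_mul]
  have e2 : ∑ i ∈ S, ∑ j ∈ Sᶜ, (f i - f j)
      = (Sᶜ.card : ℝ) * (∑ i ∈ S, f i) - (S.card : ℝ) * ∑ j ∈ Sᶜ, f j := by
    simp only [e1]
    rw [Finset.sum_sub_distrib, ← Finset.mul_sum, Finset.sum_const, nsmul_eq_mul]
  have hcompl : ∑ i ∈ S, f i + ∑ i ∈ Sᶜ, f i = 1 := by
    rw [Finset.sum_add_sum_compl, hf1]
  have hcc : (Sᶜ.card : ℝ) = (n : ℝ) - k := by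
    rw [Finset.card_compl, hcard, Fintype.card_fin]
    push_cast [hkn]
    ring
  rw [e2, hcc, hcard] at hpair
  nlinarith [hpair, hcompl]

lemma scalar_lb (k : ℕ) (μ : Fin n → ℝ) (hμ0 : ∀ i, 0 ≤ μ i) (hμ1 : ∑ i, μ i = 1)
    (hcard : (Finset.univ.filter (fun i => μ i ≠ 0)).card ≤ k) (hkn : k ≤ n) (hn : 0 < n) :
    2 * ((n : ℝ) - k) / n ≤ ∑ i, |1 / (n : ℝ) - μ i| := by
  classical
  have hnR : (0:ℝ) < n := by exact_mod_cast hn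
  set Z : Finset (Fin n) := Finset.univ.filter (fun i => μ i = 0) with hZ
  have hZc : Zᶜ = Finset.univ.filter (fun i => μ i ≠ 0) := by
    ext i
    simp [hZ]
  have hcards : (Z.card : ℝ) + (Zᶜ.card : ℝ) = n := by
    have := Finset.card_add_card_compl Z
    rw [Fintype.card_fin] at this
    exact_mod_cast this
  have hZck : (Zᶜ.card : ℝ) ≤ k := by
    rw [hZc]
    exact_mod_cast hcard
  have hs1 : ∑ i ∈ Z, |1 / (n : ℝ) - μ i| = (Z.card : ℝ) * (1 / n) := by
    rw [Finset.sum_congr rfl (fun i hi => ?_), Finset.sum_const, nsmul_eq_mul]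
    have h0 : μ i = 0 := (Finset.mem_filter.mp hi).2
    rw [h0, sub_zero, abs_of_nonneg (by positivity)]
  have hZsum : ∑ i ∈ Z, μ i = 0 :=
    Finset.sum_eq_zero fun i hi => (Finset.mem_filter.mp hi).2
  have hZcsum : ∑ i ∈ Zᶜ, μ i = 1 := by
    have := Finset.sum_add_sum_compl Z μ
    rw [hμ1, hZsum, zero_add] at this
    exact this
  have hs2 : (1 : ℝ) - (Zᶜ.card : ℝ) * (1 / n) ≤ ∑ i ∈ Zᶜ, |1 / (n : ℝ) - μ i| := by
    have h : ∑ i ∈ Zᶜ, (μ i - 1 / n) ≤ ∑ i ∈ Zᶜ, |1 / (n : ℝ) - μ i| := by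
      refine Finset.sum_le_sum fun i _ => ?_
      rw [abs_sub_comm]
      exact le_abs_self _
    rw [Finset.sum_sub_distrib, hZcsum, Finset.sum_const, nsmul_eq_mul] at h
    exact h
  have htot : ∑ i, |1 / (n : ℝ) - μ i|
      = ∑ i ∈ Z, |1 / (n : ℝ) - μ i| + ∑ i ∈ Zᶜ, |1 / (n : ℝ) - μ i| :=
    (Finset.sum_add_sum_compl Z _).symm
  rw [htot, hs1, div_le_iff₀ hnR]
  have h1n : (1:ℝ)/n * n = 1 := by field_simp
  nlinarith [hs2, hcards, hZck]


lemma exists_good (k : ℕ) (hk1 : 1 ≤ k) (hkn : k ≤ n)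
    (X : Matrix (Fin n) (Fin n) ℂ) (hX : IsDensity X) :
    ∃ Y : Matrix (Fin n) (Fin n) ℂ, IsDensity Y ∧ Y.rank ≤ k ∧
      traceNorm (X - Y) ≤ 2 * ((n : ℝ) - k) / n := by
  classical
  have hn : 0 < n := lt_of_lt_of_le hk1 hkn
  have hnR : (0:ℝ) < n := by exact_mod_cast hn
  have hkR : (0:ℝ) < k := by exact_mod_cast hk1
  have hH : X.IsHermitian := hX.1.1
  set V : Matrix (Fin n) (Fin n) ℂ := (hH.eigenvectorUnitary : Matrix (Fin n) (Fin n) ℂ) with hVdef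
  have hVmem : V ∈ Matrix.unitaryGroup (Fin n) ℂ := hH.eigenvectorUnitary.2
  set lam : Fin n → ℝ := hH.eigenvalues with hlamdef
  have hspec : X = V * Matrix.diagonal (fun i => (lam i : ℂ)) * star V := hH.spectral_theorem
  have hlam0 : ∀ i, 0 ≤ lam i := fun i => hX.1.eigenvalues_nonneg i
  have hlam1 : ∑ i, lam i = 1 := by
    have h1 : X.trace = ∑ i, (lam i : ℂ) := by
      rw [hspec, trace_conj _ _ ((Matrix.mem_unitaryGroup_iff').mp hVmem), Matrix.trace_diagonal]
    rw [hX.2] at h1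
    exact_mod_cast h1.symm
  obtain ⟨S, hScard, hStop⟩ := exists_top_subset lam k hkn
  set s : ℝ := ∑ i ∈ S, lam i with hs
  have hs_ge : (k : ℝ) / n ≤ s := topsum_ge lam hlam1 S k hScard hkn hn hStop
  have hs_pos : 0 < s := lt_of_lt_of_le (by positivity) hs_ge
  have hs_le1 : s ≤ 1 := by
    rw [hs, ← hlam1]
    exact Finset.sum_le_sum_of_subset_of_nonneg (Finset.subset_univ S) (fun i _ _ => hlam0 i)
  set d : Fin n → ℝ := fun i => if i ∈ S then lam i / s else 0 with hd
  have hd0 : ∀ i, 0 ≤ d i := by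
    intro i
    rw [hd]
    dsimp only
    split
    · exact div_nonneg (hlam0 i) hs_pos.le
    · exact le_refl 0
  have hd1 : ∑ i, d i = 1 := by
    rw [hd]
    rw [Finset.sum_ite_mem, Finset.univ_inter, ← Finset.sum_div, ← hs, div_self hs_pos.ne']
  set Y := V * Matrix.diagonal (fun i => (d i : ℂ)) * star V with hY
  refine ⟨Y, isDensity_conj V hVmem d hd0 hd1, ?_, ?_⟩
  · rw [hY, rank_conj_le V hVmem d]
    refine le_trans (Finset.card_le_card ?_) (le_of_eq hScard)
    intro i hi
    rcases Finset.mem_filter.mp hi with ⟨-, hne⟩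
    by_contra hiS
    exact hne (by rw [hd]; simp [hiS])
  · rw [hY, hspec, sub_conj, traceNorm_conj V hVmem]
    have hsplit : ∑ i, |lam i - d i| = (1 - s) + (1 - s) := by
      rw [← Finset.sum_add_sum_compl S]
      congr 1
      · have hterm : ∀ i ∈ S, |lam i - d i| = lam i / s - lam i := by
          intro i hi
          have hle : lam i ≤ lam i / s := by
            rw [le_div_iff₀ hs_pos]
            nlinarith [hlam0 i, hs_le1]
          rw [hd]
          dsimp only
          rw [if_pos hi, abs_sub_comm, abs_of_nonneg (sub_nonneg.mpr hle)]
        rw [Finset.sum_congr rfl hterm, Finset.sum_sub_distrib, ← Finset.sum_div, ← hs,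
          div_self hs_pos.ne']
      · have hterm : ∀ i ∈ Sᶜ, |lam i - d i| = lam i := by
          intro i hi
          have hiS : i ∉ S := Finset.mem_compl.mp hi
          rw [hd]
          dsimp only
          rw [if_neg hiS, sub_zero, abs_of_nonneg (hlam0 i)]
        rw [Finset.sum_congr rfl hterm]
        have h2 := Finset.sum_add_sum_compl S lam
        rw [hlam1] at h2
        linarith
    rw [hsplit]
    have hc : 2 * ((n:ℝ) - k) / n = 2 - 2 * ((k:ℝ)/n) := by
      field_simp
    rw [hc]
    linarith

lemma lb_mixed (k : ℕ) (hk1 : 1 ≤ k) (hkn : k ≤ n)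
    (Y : Matrix (Fin n) (Fin n) ℂ) (hY : IsDensity Y) (hr : Y.rank ≤ k) :
    2 * ((n : ℝ) - k) / n ≤ traceNorm ((1 / (n : ℂ)) • 1 - Y) := by
  classical
  have hn : 0 < n := lt_of_lt_of_le hk1 hkn
  have hnR : (0:ℝ) < n := by exact_mod_cast hn
  have hH : Y.IsHermitian := hY.1.1
  set V : Matrix (Fin n) (Fin n) ℂ := (hH.eigenvectorUnitary : Matrix (Fin n) (Fin n) ℂ) with hVdef
  have hVmem : V ∈ Matrix.unitaryGroup (Fin n) ℂ := hH.eigenvectorUnitary.2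
  set μ : Fin n → ℝ := hH.eigenvalues with hmudef
  have hspec : Y = V * Matrix.diagonal (fun i => (μ i : ℂ)) * star V := hH.spectral_theorem
  have hμ0 : ∀ i, 0 ≤ μ i := fun i => hY.1.eigenvalues_nonneg i
  have hμ1 : ∑ i, μ i = 1 := by
    have h1 : Y.trace = ∑ i, (μ i : ℂ) := by
      rw [hspec, trace_conj _ _ ((Matrix.mem_unitaryGroup_iff').mp hVmem), Matrix.trace_diagonal]
    rw [hY.2] at h1
    exact_mod_cast h1.symm
  have hsc : (((1:ℝ)/(n:ℝ) : ℝ) : ℂ) = 1/(n:ℂ) := by push_cast; ring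
  have hX0 : (1 / (n : ℂ)) • (1 : Matrix (Fin n) (Fin n) ℂ)
      = V * Matrix.diagonal (fun _ : Fin n => (((1:ℝ)/(n:ℝ) : ℝ) : ℂ)) * star V := by
    rw [hsc, ← Matrix.smul_one_eq_diagonal, Matrix.mul_smul, Matrix.smul_mul, Matrix.mul_one,
      (Matrix.mem_unitaryGroup_iff).mp hVmem]
  rw [hX0, hspec, sub_conj, traceNorm_conj V hVmem]
  have hcard : (Finset.univ.filter (fun i => μ i ≠ 0)).card ≤ k := by
    have h2 := hH.rank_eq_card_non_zero_eigs
    rw [Fintype.card_subtype] at h2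
    rw [← h2]
    exact hr
  exact scalar_lb k μ hμ0 hμ1 hcard hkn hn

end StmtAux

theorem stmt_3 (n k : ℕ) (hk1 : 1 ≤ k) (hkn : k ≤ n)
    (X : Matrix (Fin n) (Fin n) ℂ) (hX : IsDensity X) :
    distToLowRank traceNorm k X
        ≤ distToLowRank traceNorm k ((1 / (n : ℂ)) • (1 : Matrix (Fin n) (Fin n) ℂ)) ∧
      distToLowRank traceNorm k ((1 / (n : ℂ)) • (1 : Matrix (Fin n) (Fin n) ℂ))
        = 2 * ((n : ℝ) - k) / n := by
  have hn : 0 < n := lt_of_lt_of_le hk1 hkn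
  have hnR : (0:ℝ) < n := by exact_mod_cast hn
  have hX0d : IsDensity ((1 / (n : ℂ)) • (1 : Matrix (Fin n) (Fin n) ℂ)) := by
    constructor
    · rw [Matrix.smul_one_eq_diagonal]
      refine Matrix.posSemidef_diagonal_iff.mpr fun i => ?_
      have h1 : (1/(n:ℂ)) = (((1:ℝ)/(n:ℝ):ℝ):ℂ) := by push_cast; ring
      rw [h1]
      exact Complex.zero_le_real.mpr (by positivity)
    · rw [Matrix.trace_smul, Matrix.trace_one]
      have hce : ((Fintype.card (Fin n) : ℂ)) = (n : ℂ) := by simp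
      rw [hce, smul_eq_mul]
      field_simp
  have key : ∀ (W : Matrix (Fin n) (Fin n) ℂ), IsDensity W →
      distToLowRank traceNorm k W ≤ 2 * ((n : ℝ) - k) / n := by
    intro W hW
    obtain ⟨Y, hYd, hYr, hYle⟩ := StmtAux.exists_good k hk1 hkn W hW
    exact le_trans (StmtAux.distToLowRank_le k W Y hYd hYr) hYle
  have heq : distToLowRank traceNorm k ((1 / (n : ℂ)) • (1 : Matrix (Fin n) (Fin n) ℂ))
      = 2 * ((n : ℝ) - k) / n := by
    apply le_antisymm (key _ hX0d)
    apply le_csInf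
    · obtain ⟨Y, hYd, hYr, -⟩ := StmtAux.exists_good k hk1 hkn _ hX0d
      exact ⟨_, Y, hYd, hYr, rfl⟩
    · rintro t ⟨Y, hYd, hYr, rfl⟩
      exact StmtAux.lb_mixed k hk1 hkn Y hYd hYr
  exact ⟨by rw [heq]; exact key X hX, heq⟩
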